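/- Let t be a nonzero rational number and x a rational number. Then the arithmetic progression {x + n·t : n ∈ ℤ} is an open subset of ℚ when ℚ is given the subspace topology induced by its diagonal embedding into the finite adele ring 𝔸_{ℚ,f}. -/

import Mathlib

open IsDedekindDomain IsDedekindDomain.HeightOneSpectrum

-- Step 1: a rational with all valuations ≤ 1 is an integer
lemma exists_int_of_valuation_le_one (q : ℚ)
    (h : ∀ v : HeightOneSpectrum ℤ, v.valuation ℚ (q : ℚ) ≤ 1) : ∃ m : ℤ, q = m := by
  have hden : q.den = 1 := by
    by_contra hd
    obtain ⟨p, hp, hpd⟩ := Nat.exists_prime_and_dvd hd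
    have hpz : Prime (p : ℤ) := Int.prime_iff_natAbs_prime.mpr (by simpa using hp)
    set v : HeightOneSpectrum ℤ :=
      ⟨Ideal.span {(p : ℤ)}, (Ideal.span_singleton_prime hpz.ne_zero).2 hpz,
        by simpa [Ne, Ideal.span_singleton_eq_bot] using hpz.ne_zero⟩ with hv
    have hden0 : ((q.den : ℚ)) ≠ 0 := by exact_mod_cast q.den_ne_zero
    have hnum : (q.num : ℚ) = q * (q.den : ℚ) := by
      exact (Rat.mul_den_eq_num q).symm
    have hvden : v.valuation ℚ ((algebraMap ℤ ℚ) (q.den : ℤ)) < 1 := by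
      rw [valuation_lt_one_iff_dvd]
      exact span_singleton_dvd_span_singleton_iff_dvd.mpr
        (Int.natCast_dvd_natCast.mpr hpd)
    have hvnum : v.valuation ℚ ((algebraMap ℤ ℚ) q.num) < 1 := by
      have : v.valuation ℚ ((algebraMap ℤ ℚ) q.num) = v.valuation ℚ q * v.valuation ℚ ((algebraMap ℤ ℚ) (q.den : ℤ)) := by
        rw [show ((algebraMap ℤ ℚ) q.num : ℚ) = q * ((algebraMap ℤ ℚ) (q.den : ℤ)) by
          push_cast; exact_mod_cast hnum, Valuation.map_mul]
      calc v.valuation ℚ ((algebraMap ℤ ℚ) q.num)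
          = v.valuation ℚ q * v.valuation ℚ ((algebraMap ℤ ℚ) (q.den : ℤ)) := this
        _ ≤ 1 * v.valuation ℚ ((algebraMap ℤ ℚ) (q.den : ℤ)) := mul_le_mul_left (h v) _
        _ = v.valuation ℚ ((algebraMap ℤ ℚ) (q.den : ℤ)) := one_mul _
        _ < 1 := hvden
    rw [valuation_lt_one_iff_dvd, span_singleton_dvd_span_singleton_iff_dvd] at hvnum
    have hpnum : p ∣ q.num.natAbs := Int.natAbs_dvd_natAbs.mpr (by simpa using hvnum)
    exact hp.one_lt.ne' (Nat.eq_one_of_dvd_coprimes q.reduced hpnum hpd)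
  exact ⟨q.num, by rw [← Rat.num_div_den q, hden]; simp⟩

open scoped nonZeroDivisors

lemma algebraMap_mem_span_iff (r : ℤ) (hr : r ≠ 0) (q : ℚ) :
    algebraMap ℚ (FiniteAdeleRing ℤ ℚ) q ∈
      (fun a => algebraMap ℚ (FiniteAdeleRing ℤ ℚ) ((r : ℚ)⁻¹) * a) ⁻¹'
        {a : FiniteAdeleRing ℤ ℚ | ∀ v, a v ∈ v.adicCompletionIntegers ℚ} ↔
    ∃ m : ℤ, q = m * r := by
  have hrQ : (r : ℚ) ≠ 0 := by exact_mod_cast hr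
  simp only [Set.mem_preimage, Set.mem_setOf_eq, ← map_mul, FiniteAdeleRing.algebraMap_apply,
    mem_adicCompletionIntegers, valuedAdicCompletion_eq_valuation']
  constructor
  · intro h
    obtain ⟨m, hm⟩ := exists_int_of_valuation_le_one ((r : ℚ)⁻¹ * q) h
    refine ⟨m, ?_⟩
    rw [← hm]
    field_simp
  · rintro ⟨m, rfl⟩ v
    rw [show (r : ℚ)⁻¹ * (m * r) = algebraMap ℤ ℚ m by field_simp; simp]
    exact valuation_le_one v m

open IsDedekindDomain in
/-- For a nonzero rational `t` and a rational `x`, the arithmetic progression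
`{x + n·t : n ∈ ℤ}` is open in `ℚ` for the subspace topology induced by the diagonal embedding
of `ℚ` into the finite adele ring `𝔸_{ℚ,f}`. -/
theorem arithProgression_isOpen_adelicTopology (t : ℚ) (ht : t ≠ 0) (x : ℚ) :
    @IsOpen ℚ (TopologicalSpace.induced (algebraMap ℚ (FiniteAdeleRing ℤ ℚ)) inferInstance)
      {y : ℚ | ∃ n : ℤ, y = x + n * t} := by
  have ha : t.num ≠ 0 := Rat.num_ne_zero.mpr ht
  have haZ : t.num ∈ ℤ⁰ := mem_nonZeroDivisors_of_ne_zero ha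
  set V : Set (FiniteAdeleRing ℤ ℚ) :=
    (fun a => algebraMap ℚ (FiniteAdeleRing ℤ ℚ) ((t.num : ℚ)⁻¹) * a) ⁻¹'
      {a : FiniteAdeleRing ℤ ℚ | ∀ v, a v ∈ v.adicCompletionIntegers ℚ} with hV
  have hVopen : IsOpen V :=
    (show IsOpen {a : FiniteAdeleRing ℤ ℚ | ∀ v, a v ∈ v.adicCompletionIntegers ℚ} from
      RestrictedProduct.isOpen_forall_mem (fun v => Valued.isOpen_valuationSubring _)).preimage
      (continuous_mul_left _)
  rw [isOpen_induced_iff]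
  refine ⟨⋃ n : ℤ, (fun u => algebraMap ℚ (FiniteAdeleRing ℤ ℚ) (x + n * t) + u) '' V, ?_, ?_⟩
  · exact isOpen_iUnion fun n => (isOpenMap_add_left _) _ hVopen
  · ext q
    simp only [Set.mem_preimage, Set.mem_iUnion, Set.mem_image, Set.mem_setOf_eq]
    have hnumt : (t.num : ℚ) = t * t.den := by
      exact (Rat.mul_den_eq_num t).symm
    constructor
    · rintro ⟨n, u, hu, huq⟩
      have : algebraMap ℚ (FiniteAdeleRing ℤ ℚ) (q - (x + n * t)) ∈ V := by
        rw [map_sub]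
        rw [← huq]
        rw [add_sub_cancel_left]
        exact hu
      obtain ⟨m, hm⟩ := (algebraMap_mem_span_iff t.num ha _).1 this
      refine ⟨n + m * t.den, ?_⟩
      have : q - (x + n * t) = m * t.num := hm
      rw [hnumt] at this
      push_cast
      linarith [this]
    · rintro ⟨n, rfl⟩
      refine ⟨n, 0, ?_, by simp⟩
      simp only [hV, Set.mem_preimage, Set.mem_setOf_eq, mul_zero]
      exact fun v => zero_mem _
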